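/- arXiv:2001.00399 — 3 statements merged into one kernel-verified Lean document; each statement's English description precedes it below -/
import Mathlib

section
/- For nonnegative integers a, b, f with b ≤ f ≤ a and integer q ≥ 2, the ratio of Gaussian binomial coefficients satisfies q^((a-f-1)·b) ≤ [a choose b]_q / [f choose b]_q ≤ q^((a-f+1)·b). -/
/-- The Gaussian (q-)binomial coefficient `[a choose b]_q`, as a rational number. -/
noncomputable def gaussBinom (q a b : ℕ) : ℚ :=
  ∏ i ∈ Finset.range b, ((q : ℚ) ^ (a - i) - 1) / ((q : ℚ) ^ (b - i) - 1)

private lemma factor_bounds {Q : ℚ} (hQ : 2 ≤ Q) {k l : ℕ} (hl : 1 ≤ l) (hlk : l ≤ k) :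
    Q ^ ((k : ℤ) - l - 1) ≤ (Q ^ k - 1) / (Q ^ l - 1) ∧
      (Q ^ k - 1) / (Q ^ l - 1) ≤ Q ^ ((k : ℤ) - l + 1) := by
  have hQ0 : (0:ℚ) < Q := by linarith
  have hQ1 : (1:ℚ) < Q := by linarith
  have hden : (0:ℚ) < Q ^ l - 1 := by
    have := one_lt_pow₀ hQ1 (by omega : l ≠ 0)
    linarith
  have hk1 : 1 ≤ k := le_trans hl hlk
  constructor
  · rw [le_div_iff₀ hden]
    have he : Q ^ ((k : ℤ) - l - 1) * Q ^ l = Q ^ ((k : ℤ) - 1) := by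
      rw [← zpow_natCast Q l, ← zpow_add₀ (ne_of_gt hQ0)]
      ring_nf
    rw [mul_sub, mul_one, he]
    have hk : Q ^ ((k : ℤ) - 1) = Q ^ (k - 1) := by
      rw [show (k:ℤ) - 1 = ((k-1:ℕ):ℤ) by omega, zpow_natCast]
    rw [hk]
    have hc : (0:ℚ) < Q ^ ((k : ℤ) - l - 1) := zpow_pos hQ0 _
    have hqk : Q ^ k = Q ^ (k - 1) * Q := by
      rw [← pow_succ]
      congr 1
      omega
    have hp : (1:ℚ) ≤ Q ^ (k - 1) := one_le_pow₀ (by linarith)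
    nlinarith
  · rw [div_le_iff₀ hden]
    have he : Q ^ ((k : ℤ) - l + 1) * Q ^ l = Q ^ ((k : ℤ) + 1) := by
      rw [← zpow_natCast Q l, ← zpow_add₀ (ne_of_gt hQ0)]
      ring_nf
    rw [mul_sub, mul_one, he]
    have h1 : Q ^ ((k : ℤ) + 1) = Q ^ (k + 1) := by
      rw [show (k:ℤ) + 1 = ((k+1:ℕ):ℤ) by omega, zpow_natCast]
    have h2 : Q ^ ((k : ℤ) - l + 1) = Q ^ (k - l + 1) := by
      rw [show (k:ℤ) - l + 1 = ((k-l+1:ℕ):ℤ) by omega, zpow_natCast]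
    rw [h1, h2]
    have h3 : Q ^ (k - l + 1) ≤ Q ^ k := pow_le_pow_right₀ (by linarith) (by omega)
    have h4 : Q ^ (k + 1) = Q ^ k * Q := pow_succ Q k
    have hp : (1:ℚ) ≤ Q ^ k := one_le_pow₀ (by linarith)
    nlinarith

theorem gaussBinom_ratio_bounds (q a b f : ℕ) (hq : 2 ≤ q) (hbf : b ≤ f) (hfa : f ≤ a) :
    (q : ℚ) ^ (((a : ℤ) - f - 1) * b) ≤ gaussBinom q a b / gaussBinom q f b ∧
      gaussBinom q a b / gaussBinom q f b ≤ (q : ℚ) ^ (((a : ℤ) - f + 1) * b) := by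
  have hQ : (2:ℚ) ≤ (q:ℚ) := by exact_mod_cast hq
  have hQ0 : (0:ℚ) < (q:ℚ) := by linarith
  have hratio : gaussBinom q a b / gaussBinom q f b =
      ∏ i ∈ Finset.range b, ((q:ℚ) ^ (a - i) - 1) / ((q:ℚ) ^ (f - i) - 1) := by
    unfold gaussBinom
    rw [← Finset.prod_div_distrib]
    apply Finset.prod_congr rfl
    intro i hi
    rw [Finset.mem_range] at hi
    have hB : ((q:ℚ) ^ (b - i) - 1) ≠ 0 := by
      have : (1:ℚ) < (q:ℚ) ^ (b - i) := one_lt_pow₀ (by linarith) (by omega)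
      linarith
    field_simp
  rw [hratio]
  have key : ∀ i ∈ Finset.range b,
      (q:ℚ) ^ ((a : ℤ) - f - 1) ≤ ((q:ℚ) ^ (a - i) - 1) / ((q:ℚ) ^ (f - i) - 1) ∧
      ((q:ℚ) ^ (a - i) - 1) / ((q:ℚ) ^ (f - i) - 1) ≤ (q:ℚ) ^ ((a : ℤ) - f + 1) := by
    intro i hi
    rw [Finset.mem_range] at hi
    have h := factor_bounds hQ (k := a - i) (l := f - i) (by omega) (by omega)
    have e1 : ((a - i : ℕ) : ℤ) - ((f - i : ℕ) : ℤ) - 1 = (a : ℤ) - f - 1 := by omega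
    have e2 : ((a - i : ℕ) : ℤ) - ((f - i : ℕ) : ℤ) + 1 = (a : ℤ) - f + 1 := by omega
    rw [e1, e2] at h
    exact h
  constructor
  · calc (q : ℚ) ^ (((a : ℤ) - f - 1) * b)
        = ∏ _i ∈ Finset.range b, (q:ℚ) ^ ((a : ℤ) - f - 1) := by
          rw [Finset.prod_const, Finset.card_range, ← zpow_natCast, ← zpow_mul]
      _ ≤ _ := Finset.prod_le_prod (fun i _ => le_of_lt (zpow_pos hQ0 _))
          (fun i hi => (key i hi).1)
  · calc (∏ i ∈ Finset.range b, ((q:ℚ) ^ (a - i) - 1) / ((q:ℚ) ^ (f - i) - 1))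
        ≤ ∏ _i ∈ Finset.range b, (q:ℚ) ^ ((a : ℤ) - f + 1) := by
          apply Finset.prod_le_prod
          · intro i hi
            rw [Finset.mem_range] at hi
            have h1 : (1:ℚ) < (q:ℚ) ^ (a - i) := one_lt_pow₀ (by linarith) (by omega)
            have h2 : (1:ℚ) < (q:ℚ) ^ (f - i) := one_lt_pow₀ (by linarith) (by omega)
            exact le_of_lt (div_pos (by linarith) (by linarith))
          · exact fun i hi => (key i hi).2
      _ = (q : ℚ) ^ (((a : ℤ) - f + 1) * b) := by
          rw [Finset.prod_const, Finset.card_range, ← zpow_natCast, ← zpow_mul]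
end

section
/- Let B be a bipartite graph with left vertex set the n-element linearly independent sets of 1-dimensional subspaces of F_q^k, right vertex set the m-element linearly independent sets, and edges {X, Y} whenever X ∪ Y is an (n+m)-element linearly independent set. For each (n+m)-element linearly independent set Z, the edge set C_Z = {{X, Z\X} : X ⊆ Z, |X| = n} is an induced matching of B of size C(n+m, n), and the family {C_Z} over all such Z partitions the edge set of B. -/
variable (𝔽 : Type*) [Field 𝔽] (k : ℕ) [DecidableEq (Submodule 𝔽 (Fin k → 𝔽))]

/-- `s` is an `r`-element set of 1-dimensional subspaces of `F_q^k` whose sum has dimension `r`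
(i.e. a linearly independent set of lines). -/
def LinIndSet (r : ℕ) (s : Finset (Submodule 𝔽 (Fin k → 𝔽))) : Prop :=
  s.card = r ∧ (∀ T ∈ s, Module.finrank 𝔽 T = 1) ∧
    Module.finrank 𝔽 ((s.sup id : Submodule 𝔽 (Fin k → 𝔽)) : Type _) = r

/-- The edge set of the bipartite graph `B`: pairs `(X, Y)` of a linearly independent `n`-set
and `m`-set of lines whose union is a linearly independent `(n+m)`-set. -/
def edgeSetB (n m : ℕ) :
    Set (Finset (Submodule 𝔽 (Fin k → 𝔽)) × Finset (Submodule 𝔽 (Fin k → 𝔽))) :=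
  {p | LinIndSet 𝔽 k n p.1 ∧ LinIndSet 𝔽 k m p.2 ∧ LinIndSet 𝔽 k (n + m) (p.1 ∪ p.2)}

/-- The candidate induced matching `C_Z = {(X, Z \ X) : X ⊆ Z, |X| = n}`. -/
def matchingCZ (n : ℕ) (Z : Finset (Submodule 𝔽 (Fin k → 𝔽))) :
    Set (Finset (Submodule 𝔽 (Fin k → 𝔽)) × Finset (Submodule 𝔽 (Fin k → 𝔽))) :=
  {p | p.1 ⊆ Z ∧ p.1.card = n ∧ p.2 = Z \ p.1}

set_option linter.unusedSectionVars false in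
lemma finrank_sup_le_card (s : Finset (Submodule 𝔽 (Fin k → 𝔽)))
    (h : ∀ T ∈ s, Module.finrank 𝔽 T = 1) :
    Module.finrank 𝔽 ((s.sup id : Submodule 𝔽 (Fin k → 𝔽)) : Type _) ≤ s.card := by
  classical
  induction s using Finset.cons_induction with
  | empty => simp
  | cons a s ha ih =>
    rw [Finset.sup_cons, Finset.card_cons]
    have h1 : Module.finrank 𝔽 a = 1 := h a (Finset.mem_cons_self _ _)
    have h2 := ih (fun T hT => h T (Finset.mem_cons_of_mem hT))
    have key := Submodule.finrank_sup_add_finrank_inf_eq a (s.sup id)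
    simp only [id] at key ⊢
    omega

lemma linIndSet_subset {r : ℕ} {Z X : Finset (Submodule 𝔽 (Fin k → 𝔽))}
    (hZ : LinIndSet 𝔽 k r Z) (hX : X ⊆ Z) : LinIndSet 𝔽 k X.card X := by
  classical
  obtain ⟨hcard, hone, hrank⟩ := hZ
  refine ⟨rfl, fun T hT => hone T (hX hT), ?_⟩
  have hsup : Z.sup id = X.sup id ⊔ (Z \ X).sup id := by
    conv_lhs => rw [← Finset.union_sdiff_of_subset hX]
    exact Finset.sup_union
  have hle1 := finrank_sup_le_card 𝔽 k X (fun T hT => hone T (hX hT))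
  have hle2 := finrank_sup_le_card 𝔽 k (Z \ X) (fun T hT => hone T (Finset.sdiff_subset hT))
  have key := Submodule.finrank_sup_add_finrank_inf_eq (X.sup id) ((Z \ X).sup id)
  have h3 : Module.finrank 𝔽 ((Z.sup id : Submodule 𝔽 (Fin k → 𝔽)) : Type _) ≤
      Module.finrank 𝔽 ((X.sup id : Submodule 𝔽 (Fin k → 𝔽)) : Type _) +
      Module.finrank 𝔽 (((Z \ X).sup id : Submodule 𝔽 (Fin k → 𝔽)) : Type _) := by
    rw [hsup]; omega
  have hcards : X.card + (Z \ X).card = Z.card := by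
    have := Finset.card_le_card hX
    rw [Finset.card_sdiff_of_subset hX]
    omega
  omega

/-- For each linearly independent `(n+m)`-set `Z`, `C_Z` is an induced matching of `B` of size
`C(n+m, n)`, and the family `{C_Z}` partitions the edge set of `B`: every edge lies in `C_Z`
for exactly one such `Z`. -/
theorem matchingCZ_induced_matching_cover (q n m : ℕ) [Fintype 𝔽]
    (hq : Fintype.card 𝔽 = q) (hn : 0 < n) (hm : 0 < m) (hnm : n + m ≤ k) :
    (∀ Z : Finset (Submodule 𝔽 (Fin k → 𝔽)), LinIndSet 𝔽 k (n + m) Z →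
      matchingCZ 𝔽 k n Z ⊆ edgeSetB 𝔽 k n m ∧
      (matchingCZ 𝔽 k n Z).ncard = Nat.choose (n + m) n ∧
      (∀ p₁ ∈ matchingCZ 𝔽 k n Z, ∀ p₂ ∈ matchingCZ 𝔽 k n Z, p₁ ≠ p₂ →
        p₁.1 ≠ p₂.1 ∧ p₁.2 ≠ p₂.2 ∧
        (p₁.1, p₂.2) ∉ edgeSetB 𝔽 k n m ∧ (p₂.1, p₁.2) ∉ edgeSetB 𝔽 k n m)) ∧
    (∀ p ∈ edgeSetB 𝔽 k n m,
      ∃! Z : Finset (Submodule 𝔽 (Fin k → 𝔽)),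
        LinIndSet 𝔽 k (n + m) Z ∧ p ∈ matchingCZ 𝔽 k n Z) := by
  classical
  constructor
  · intro Z hZ
    have hZcard : Z.card = n + m := hZ.1
    -- membership of C_Z in edge set
    have hsub : matchingCZ 𝔽 k n Z ⊆ edgeSetB 𝔽 k n m := by
      rintro ⟨X, Y⟩ ⟨hXZ, hXn, hY⟩
      dsimp only at hXZ hXn hY
      have hYZ : Y ⊆ Z := by rw [hY]; exact Finset.sdiff_subset
      have hYcard : Y.card = m := by
        have := Finset.card_le_card hXZ
        rw [hY, Finset.card_sdiff_of_subset hXZ, hZcard, hXn]; omega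
      have hXlin := linIndSet_subset 𝔽 k hZ hXZ
      have hYlin := linIndSet_subset 𝔽 k hZ hYZ
      rw [hXn] at hXlin; rw [hYcard] at hYlin
      have hU : X ∪ Y = Z := by
        rw [hY, Finset.union_sdiff_of_subset hXZ]
      exact ⟨hXlin, hYlin, by dsimp only; rw [hU]; exact hZ⟩
    refine ⟨hsub, ?_, ?_⟩
    · -- cardinality
      have himg : matchingCZ 𝔽 k n Z =
          (fun X => (X, Z \ X)) '' (Z.powersetCard n : Finset (Finset (Submodule 𝔽 (Fin k → 𝔽)))) := by
        ext ⟨X, Y⟩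
        simp only [matchingCZ, Set.mem_setOf_eq, Set.mem_image, Finset.mem_coe,
          Finset.mem_powersetCard, Prod.mk.injEq]
        constructor
        · rintro ⟨h1, h2, h3⟩; exact ⟨X, ⟨h1, h2⟩, rfl, h3.symm⟩
        · rintro ⟨W, ⟨h1, h2⟩, rfl, rfl⟩; exact ⟨h1, h2, rfl⟩
      rw [himg, Set.ncard_image_of_injective _ (fun a b hab => (Prod.mk.injEq _ _ _ _ ▸ hab).1),
        Set.ncard_coe_finset, Finset.card_powersetCard, hZcard]
    · -- induced matching property
      rintro ⟨X₁, Y₁⟩ ⟨hX₁, hn₁, hY₁⟩ ⟨X₂, Y₂⟩ ⟨hX₂, hn₂, hY₂⟩ hne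
      dsimp only at hX₁ hn₁ hY₁ hX₂ hn₂ hY₂ ⊢
      have hfst : X₁ ≠ X₂ := by
        rintro rfl
        exact hne (by rw [Prod.mk.injEq]; exact ⟨rfl, hY₁.trans hY₂.symm⟩)
      have hsnd : Y₁ ≠ Y₂ := by
        intro hY
        apply hfst
        have h : Z \ Y₁ = Z \ Y₂ := by rw [hY]
        rwa [hY₁, hY₂, Finset.sdiff_sdiff_eq_self hX₁, Finset.sdiff_sdiff_eq_self hX₂] at h
      refine ⟨hfst, hsnd, ?_, ?_⟩
      · rintro ⟨-, -, hlin⟩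
        have hcard : (X₁ ∪ Y₂).card = n + m := hlin.1
        have hY₂Z : Y₂ ⊆ Z := by rw [hY₂]; exact Finset.sdiff_subset
        have hsubZ : X₁ ∪ Y₂ ⊆ Z := Finset.union_subset hX₁ hY₂Z
        have hEq : X₁ ∪ Y₂ = Z := Finset.eq_of_subset_of_card_le hsubZ (by omega)
        have hY₂card : Y₂.card = m := by
          have := Finset.card_le_card hX₂
          rw [hY₂, Finset.card_sdiff_of_subset hX₂, hZcard, hn₂]; omega
        have hdisj : Disjoint X₁ Y₂ := by
          rw [← Finset.card_union_eq_card_add_card]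
          omega
        apply hsnd
        rw [hY₁, ← hEq, Finset.union_sdiff_cancel_left hdisj]
      · rintro ⟨-, -, hlin⟩
        have hcard : (X₂ ∪ Y₁).card = n + m := hlin.1
        have hY₁Z : Y₁ ⊆ Z := by rw [hY₁]; exact Finset.sdiff_subset
        have hsubZ : X₂ ∪ Y₁ ⊆ Z := Finset.union_subset hX₂ hY₁Z
        have hEq : X₂ ∪ Y₁ = Z := Finset.eq_of_subset_of_card_le hsubZ (by omega)
        have hY₁card : Y₁.card = m := by
          have := Finset.card_le_card hX₁
          rw [hY₁, Finset.card_sdiff_of_subset hX₁, hZcard, hn₁]; omega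
        have hdisj : Disjoint X₂ Y₁ := by
          rw [← Finset.card_union_eq_card_add_card]
          omega
        apply hsnd
        rw [hY₂, ← hEq, Finset.union_sdiff_cancel_left hdisj]
  · -- partition
    rintro ⟨X, Y⟩ ⟨hX, hY, hXY⟩
    dsimp only at hX hY hXY
    have hdisj : Disjoint X Y := by
      rw [← Finset.card_union_eq_card_add_card]
      rw [hXY.1, hX.1, hY.1]
    refine ⟨X ∪ Y, ⟨hXY, Finset.subset_union_left, hX.1,
      (Finset.union_sdiff_cancel_left hdisj).symm⟩, ?_⟩
    rintro Z ⟨hZlin, hXZ, hXn, hYZ⟩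
    dsimp only at hXZ hXn hYZ
    have hZcard : Z.card = n + m := hZlin.1
    have hYsub : Y ⊆ Z := by rw [hYZ]; exact Finset.sdiff_subset
    have hsubZ : X ∪ Y ⊆ Z := Finset.union_subset hXZ hYsub
    exact (Finset.eq_of_subset_of_card_le hsubZ (by rw [hZcard, hXY.1])).symm
end

section
/- Let B be a bi-regular bipartite graph with K left vertices of degree D and F right vertices of degree d (so KD = Fd). Then there exist left vertices k_1, k_2, ..., k_d and nested neighborhood sets N_1 ⊇ N_2 ⊇ ⋯ ⊇ N_d of right vertices with k_j adjacent to every vertex of N_j, such that |N_1| = D and |N_j| ≥ ⌈(d − (j−1))·|N_{j−1}| / (K − (j−1))⌉ for 2 ≤ j ≤ d. -/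
open Finset

lemma pigeon_aux {α β : Type*} [Fintype α] [Fintype β]
    (r : α → β → Prop) [∀ a b, Decidable (r a b)] (d : ℕ)
    (hd : ∀ b : β, (Finset.univ.filter fun a => r a b).card = d)
    (S : Finset α) (N : Finset β) (hS : S.card < Fintype.card α) :
    ∃ a ∉ S, (d - S.card) * N.card ≤
      (Fintype.card α - S.card) * (N.filter fun b => r a b).card := by
  classical
  set T := Sᶜ with hT
  have hTcard : T.card = Fintype.card α - S.card := by
    simp [hT, Finset.card_compl]
  have hTne : T.Nonempty := by
    rw [← Finset.card_pos, hTcard]; omega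
  have key : ∀ b : β, d - S.card ≤ (T.filter fun a => r a b).card := by
    intro b
    have h1 : (Finset.univ.filter fun a => r a b) \ S ⊆ T.filter fun a => r a b := by
      intro a ha
      simp only [Finset.mem_sdiff, Finset.mem_filter, Finset.mem_univ, true_and,
        hT, Finset.mem_compl] at *
      tauto
    have h2 := Finset.card_le_card h1
    have h3 := Finset.le_card_sdiff S (Finset.univ.filter fun a => r a b)
    rw [hd b] at h3
    omega
  have hsum : N.card * (d - S.card) ≤ ∑ a ∈ T, (N.filter fun b => r a b).card := by
    have swap : ∑ a ∈ T, (N.filter fun b => r a b).card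
        = ∑ b ∈ N, (T.filter fun a => r a b).card := by
      simp only [Finset.card_filter]
      rw [Finset.sum_comm]
    rw [swap]
    calc N.card * (d - S.card) = ∑ _b ∈ N, (d - S.card) := by
          rw [Finset.sum_const, smul_eq_mul, mul_comm]
      _ ≤ _ := Finset.sum_le_sum fun b _ => key b
  have hmain : ∑ a ∈ T, (d - S.card) * N.card ≤
      ∑ a ∈ T, (Fintype.card α - S.card) * (N.filter fun b => r a b).card := by
    rw [Finset.sum_const, ← Finset.mul_sum, hTcard, smul_eq_mul]
    calc (Fintype.card α - S.card) * ((d - S.card) * N.card)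
        = (Fintype.card α - S.card) * (N.card * (d - S.card)) := by ring
      _ ≤ _ := Nat.mul_le_mul_left _ hsum
  obtain ⟨a, haT, hle⟩ := Finset.exists_le_of_sum_le hTne hmain
  exact ⟨a, by simpa [hT] using haT, hle⟩

lemma main_aux {α β : Type*} [Fintype α] [Fintype β]
    (r : α → β → Prop) [∀ a b, Decidable (r a b)]
    (K D d : ℕ) (hK : Fintype.card α = K)
    (hD : ∀ a : α, (Finset.univ.filter fun b => r a b).card = D)
    (hd : ∀ b : β, (Finset.univ.filter fun a => r a b).card = d)
    (hdK : d ≤ K) :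
    ∀ n : ℕ, ∀ (hn : 0 < n), n ≤ d → ∃ (ks : Fin n → α) (Ns : Fin n → Finset β),
      Function.Injective ks ∧
      (∀ j, ∀ b ∈ Ns j, r (ks j) b) ∧
      (∀ j j', j ≤ j' → Ns j' ⊆ Ns j) ∧
      (Ns ⟨0, hn⟩).card = D ∧
      (∀ j : Fin n, 0 < j.val →
        (d - j.val) * (Ns ⟨j.val - 1, Nat.lt_of_le_of_lt (Nat.sub_le _ _) j.isLt⟩).card
          ≤ (K - j.val) * (Ns j).card) := by
  intro n
  induction n with
  | zero => omega
  | succ n ih =>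
    classical
    intro hn hnd
    rcases Nat.eq_zero_or_pos n with hn0 | hn0
    · subst hn0
      have hne : Nonempty α := by
        rw [← Fintype.card_pos_iff, hK]; omega
      obtain ⟨a⟩ := hne
      refine ⟨fun _ => a, fun _ => Finset.univ.filter fun b => r a b,
        fun i j _ => Fin.ext (by omega), ?_, ?_, hD a, ?_⟩
      · intro j b hb
        simpa using hb
      · intro j j' _; exact Finset.Subset.refl _
      · intro j hj; omega
    · obtain ⟨ks, Ns, hinj, hadj, hnest, hcard0, hbound⟩ := ih hn0 (by omega)
      set S := Finset.image ks Finset.univ with hSdef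
      have hScard : S.card = n := by
        rw [hSdef, Finset.card_image_of_injective _ hinj, Finset.card_univ,
          Fintype.card_fin]
      have hSlt : S.card < Fintype.card α := by rw [hScard, hK]; omega
      obtain ⟨a, haS, hab⟩ := pigeon_aux r d hd S (Ns ⟨n - 1, by omega⟩) hSlt
      simp only [hScard, hK] at hab
      set Nnew := (Ns ⟨n - 1, by omega⟩).filter fun b => r a b with hNnew
      refine ⟨fun j => if h : j.val < n then ks ⟨j.val, h⟩ else a,
        fun j => if h : j.val < n then Ns ⟨j.val, h⟩ else Nnew, ?_, ?_, ?_, ?_, ?_⟩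
      · intro i j hij
        simp only at hij
        split_ifs at hij with hi hj hj
        · have h2 : (⟨i.val, hi⟩ : Fin n) = ⟨j.val, hj⟩ := hinj hij
          simp only [Fin.mk.injEq] at h2
          exact Fin.ext h2
        · exact absurd (hij ▸ Finset.mem_image_of_mem ks (Finset.mem_univ (⟨i.val, hi⟩ : Fin n))) haS
        · exact absurd (hij ▸ Finset.mem_image_of_mem ks (Finset.mem_univ (⟨j.val, hj⟩ : Fin n))) haS
        · exact Fin.ext (by omega)
      · intro j b hb
        by_cases h : j.val < n
        · simp only [dif_pos h] at hb ⊢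
          exact hadj _ b hb
        · simp only [dif_neg h, hNnew, Finset.mem_filter] at hb ⊢
          exact hb.2
      · intro j j' hle b hb
        have hv : j.val ≤ j'.val := hle
        by_cases hj' : j'.val < n
        · have hj : j.val < n := lt_of_le_of_lt hv hj'
          simp only [dif_pos hj', dif_pos hj] at hb ⊢
          exact hnest ⟨j.val, hj⟩ ⟨j'.val, hj'⟩ hv hb
        · by_cases hj : j.val < n
          · simp only [dif_neg hj', dif_pos hj] at hb ⊢
            have h1 : b ∈ Ns ⟨n - 1, by omega⟩ := (Finset.mem_filter.mp hb).1
            exact hnest ⟨j.val, hj⟩ ⟨n - 1, by omega⟩ (by simp [Fin.le_def]; omega) h1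
          · simp only [dif_neg hj', dif_neg hj] at hb ⊢
            exact hb
      · simp only [dif_pos hn0]
        exact hcard0
      · rintro ⟨jv, hjlt⟩ hj
        simp only at hj ⊢
        by_cases h : jv < n
        · have h1 : jv - 1 < n := by omega
          simp only [dif_pos h, dif_pos h1]
          exact hbound ⟨jv, h⟩ hj
        · have hjn : jv = n := by omega
          subst hjn
          rw [dif_neg h, dif_pos (show jv - 1 < jv by omega)]
          exact hab

/-- In a bi-regular bipartite graph with `K` left vertices of degree `D` and `F` right vertices
of degree `d` (so `K·D = F·d`), there exist distinct left vertices `k_1, …, k_d` and nested sets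
`N_1 ⊇ N_2 ⊇ ⋯ ⊇ N_d` of right vertices with `k_j` adjacent to every vertex of `N_j`, such that
`|N_1| = D` and `|N_j| ≥ ⌈(d − (j−1))·|N_{j−1}| / (K − (j−1))⌉` for `2 ≤ j ≤ d`. -/
theorem nested_neighborhoods_of_biregular (α β : Type*) [Fintype α] [Fintype β]
    (r : α → β → Prop) [∀ a b, Decidable (r a b)]
    (K F D d : ℕ) (hK : Fintype.card α = K) (hF : Fintype.card β = F)
    (hD : ∀ a : α, (Finset.univ.filter fun b => r a b).card = D)
    (hd : ∀ b : β, (Finset.univ.filter fun a => r a b).card = d)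
    (hedge : K * D = F * d) (hdpos : 0 < d) (hdK : d ≤ K) :
    ∃ (ks : Fin d → α) (Ns : Fin d → Finset β),
      Function.Injective ks ∧
      (∀ j : Fin d, ∀ b ∈ Ns j, r (ks j) b) ∧
      (∀ j j' : Fin d, j ≤ j' → Ns j' ⊆ Ns j) ∧
      (Ns ⟨0, hdpos⟩).card = D ∧
      (∀ j : Fin d, 0 < j.val →
        (⌈(((d - j.val : ℕ) : ℚ) *
              ((Ns ⟨j.val - 1, Nat.lt_of_le_of_lt (Nat.sub_le _ _) j.isLt⟩).card : ℚ)) /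
            ((K - j.val : ℕ) : ℚ)⌉ : ℤ) ≤ ((Ns j).card : ℤ)) := by
  obtain ⟨ks, Ns, hinj, hadj, hnest, hcard0, hbound⟩ :=
    main_aux r K D d hK hD hd hdK d hdpos le_rfl
  refine ⟨ks, Ns, hinj, hadj, hnest, hcard0, ?_⟩
  intro j hj
  have hb := hbound j hj
  have hKj : 0 < K - j.val := by have := j.isLt; omega
  rw [Int.ceil_le, div_le_iff₀ (by exact_mod_cast hKj)]
  have hb2 := hb.trans_eq (Nat.mul_comm _ _)
  exact_mod_cast hb2
end
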